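/- Let μ,ν>0 with Sc=ν/μ, let η>0, set κ_η=(η/ν³)^{1/6}, and fix constants c1,…,c5>0 with c4 ≤ Sc ≤ c5. Let t be a tracer spectrum (2D framework) with shell sums 𝐭, dissipation rate χ and wavenumber κ_θ, and let κ0 ≤ κf⁺ with 4κf⁺ ≤ κ_η. Assume: (i) for every κ∈[κf⁺,κ_η], c1·χ·η^{-1/3} ≤ 𝐭_{κ,2κ} ≤ c2·χ·η^{-1/3}; (ii) 𝐭_{κ0,∞} ≤ c3·𝐭_{κf⁺,κ_η}. Then there exist constants c,C>0 depending only on c1,…,c5 such that c·κ_η²/ln(κ_η/κf⁺) ≤ κ_θ² ≤ C·κ_η²/ln(κ_η/κf⁺). (The moderate-Schmidt-number computation of Section 5.2: κ_θ ∼ κ_η up to a logarithm.) -/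

import Mathlib

open Real

/-- Euclidean norm of a lattice vector `k ∈ ℤ^d`. -/
noncomputable def knorm {d : ℕ} (k : Fin d → ℤ) : ℝ :=
  Real.sqrt (∑ i, ((k i : ℝ)) ^ 2)

/-- Shell sum `𝐭_{κ1,κ2}` (finite upper end). -/
noncomputable def shellSum (d : ℕ) (L κ0 : ℝ) (t : (Fin d → ℤ) → ℝ) (κ1 κ2 : ℝ) : ℝ :=
  L ^ (-(d : ℤ)) * ∑' k : Fin d → ℤ,
    (if κ1 ≤ κ0 * knorm k ∧ κ0 * knorm k < κ2 then t k else 0)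

/-- Shell sum `𝐭_{κ1,∞}`. -/
noncomputable def shellSumTop (d : ℕ) (L κ0 : ℝ) (t : (Fin d → ℤ) → ℝ) (κ1 : ℝ) : ℝ :=
  L ^ (-(d : ℤ)) * ∑' k : Fin d → ℤ, (if κ1 ≤ κ0 * knorm k then t k else 0)

/-- Tracer dissipation rate `χ = μ L^{-d} κ0² Σ_k |k|² t(k)`. -/
noncomputable def chiRate (d : ℕ) (L κ0 μ : ℝ) (t : (Fin d → ℤ) → ℝ) : ℝ :=
  μ * L ^ (-(d : ℤ)) * κ0 ^ 2 * ∑' k : Fin d → ℤ, knorm k ^ 2 * t k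

/-- Indicator wavenumber squared, `κ_θ² = κ0² Σ|k|²t(k) / Σ t(k)`. -/
noncomputable def kThetaSq (d : ℕ) (κ0 : ℝ) (t : (Fin d → ℤ) → ℝ) : ℝ :=
  κ0 ^ 2 * (∑' k : Fin d → ℤ, knorm k ^ 2 * t k) / (∑' k : Fin d → ℤ, t k)

/-- A (discrete) tracer spectrum: nonnegative, vanishing at `k = 0`, not identically
zero, and with `Σ (1+|k|²) t(k) < ∞`. -/
structure IsTracerSpectrum (d : ℕ) (t : (Fin d → ℤ) → ℝ) : Prop where
  nonneg : ∀ k, 0 ≤ t k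
  map_zero : t 0 = 0
  exists_ne_zero : ∃ k, t k ≠ 0
  summable : Summable fun k : Fin d → ℤ => (1 + knorm k ^ 2) * t k

section Aux
variable {d : ℕ} {t : (Fin d → ℤ) → ℝ}

lemma knorm_nonneg (k : Fin d → ℤ) : 0 ≤ knorm k := Real.sqrt_nonneg _

lemma one_le_knorm {k : Fin d → ℤ} (hk : k ≠ 0) : 1 ≤ knorm k := by
  obtain ⟨i, hi⟩ := Function.ne_iff.mp hk
  simp only [Pi.zero_apply] at hi
  have h0 : (1:ℤ) ≤ (k i) ^ 2 := by
    rcases lt_or_gt_of_ne hi with h | h <;> nlinarith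
  have h1 : (1:ℝ) ≤ ((k i : ℝ)) ^ 2 := by exact_mod_cast h0
  have h2 : (1:ℝ) ≤ ∑ j, ((k j : ℝ)) ^ 2 :=
    h1.trans (Finset.single_le_sum (f := fun j => ((k j : ℝ)) ^ 2)
      (fun j _ => sq_nonneg _) (Finset.mem_univ i))
  have h3 := Real.sqrt_le_sqrt h2
  rwa [Real.sqrt_one] at h3

lemma summable_t (hts : IsTracerSpectrum d t) : Summable t :=
  Summable.of_nonneg_of_le hts.nonneg
    (fun k => by nlinarith [hts.nonneg k, sq_nonneg (knorm k)]) hts.summable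

lemma summable_k2t (hts : IsTracerSpectrum d t) :
    Summable fun k : Fin d → ℤ => knorm k ^ 2 * t k :=
  Summable.of_nonneg_of_le (fun k => mul_nonneg (sq_nonneg _) (hts.nonneg k))
    (fun k => by nlinarith [hts.nonneg k, sq_nonneg (knorm k)]) hts.summable

lemma shell_summable (hts : IsTracerSpectrum d t) (κ0 κ1 κ2 : ℝ) :
    Summable fun k : Fin d → ℤ =>
      (if κ1 ≤ κ0 * knorm k ∧ κ0 * knorm k < κ2 then t k else 0) :=
  Summable.of_nonneg_of_le
    (fun k => by split_ifs with h; exacts [hts.nonneg k, le_rfl])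
    (fun k => by split_ifs with h; exacts [le_rfl, hts.nonneg k]) (summable_t hts)

lemma top_summable (hts : IsTracerSpectrum d t) (κ0 κ1 : ℝ) :
    Summable fun k : Fin d → ℤ => (if κ1 ≤ κ0 * knorm k then t k else 0) :=
  Summable.of_nonneg_of_le
    (fun k => by split_ifs with h; exacts [hts.nonneg k, le_rfl])
    (fun k => by split_ifs with h; exacts [le_rfl, hts.nonneg k]) (summable_t hts)

lemma shell_add (hts : IsTracerSpectrum d t) (L κ0 : ℝ)
    {κ1 κ2 κ3 : ℝ} (h12 : κ1 ≤ κ2) (h23 : κ2 ≤ κ3) :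
    shellSum d L κ0 t κ1 κ3 = shellSum d L κ0 t κ1 κ2 + shellSum d L κ0 t κ2 κ3 := by
  unfold shellSum
  rw [← mul_add, ← Summable.tsum_add (shell_summable hts κ0 κ1 κ2) (shell_summable hts κ0 κ2 κ3)]
  congr 1
  refine tsum_congr fun k => ?_
  by_cases ha : κ1 ≤ κ0 * knorm k
  · by_cases hb : κ0 * knorm k < κ2
    · rw [if_pos ⟨ha, lt_of_lt_of_le hb h23⟩, if_pos ⟨ha, hb⟩,
        if_neg (by rintro ⟨h, _⟩; linarith), add_zero]
    · by_cases hc : κ0 * knorm k < κ3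
      · rw [if_pos ⟨ha, hc⟩, if_neg (by rintro ⟨_, h⟩; exact hb h),
          if_pos ⟨le_of_not_gt hb, hc⟩, zero_add]
      · rw [if_neg (by rintro ⟨_, h⟩; exact hc h), if_neg (by rintro ⟨_, h⟩; exact hb h),
          if_neg (by rintro ⟨_, h⟩; exact hc h), add_zero]
  · rw [if_neg (by rintro ⟨h, _⟩; exact ha h), if_neg (by rintro ⟨h, _⟩; exact ha h),
      if_neg (by rintro ⟨h, _⟩; linarith), add_zero]

lemma shell_mono_right (hts : IsTracerSpectrum d t) {L : ℝ} (hL : 0 < L) (κ0 κ1 : ℝ)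
    {κ2 κ2' : ℝ} (h : κ2 ≤ κ2') :
    shellSum d L κ0 t κ1 κ2 ≤ shellSum d L κ0 t κ1 κ2' := by
  unfold shellSum
  refine mul_le_mul_of_nonneg_left ?_ (by positivity)
  refine Summable.tsum_le_tsum (fun k => ?_) (shell_summable hts κ0 κ1 κ2) (shell_summable hts κ0 κ1 κ2')
  split_ifs with h1 h2
  · exact le_rfl
  · exact absurd ⟨h1.1, lt_of_lt_of_le h1.2 h⟩ h2
  · exact hts.nonneg k
  · exact le_rfl

lemma shell_le_top (hts : IsTracerSpectrum d t) {L : ℝ} (hL : 0 < L) (κ0 : ℝ)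
    {κ1' κ1 : ℝ} (h : κ1' ≤ κ1) (κ2 : ℝ) :
    shellSum d L κ0 t κ1 κ2 ≤ shellSumTop d L κ0 t κ1' := by
  unfold shellSum shellSumTop
  refine mul_le_mul_of_nonneg_left ?_ (by positivity)
  refine Summable.tsum_le_tsum (fun k => ?_) (shell_summable hts κ0 κ1 κ2) (top_summable hts κ0 κ1')
  split_ifs with h1 h2
  · exact le_rfl
  · exact absurd (h.trans h1.1) h2
  · exact hts.nonneg k
  · exact le_rfl

lemma shell_dyadic (hts : IsTracerSpectrum d t) (L κ0 : ℝ)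
    {κ1 : ℝ} (hκ1 : 0 < κ1) (n : ℕ) :
    shellSum d L κ0 t κ1 (2 ^ n * κ1)
      = ∑ j ∈ Finset.range n, shellSum d L κ0 t (2 ^ j * κ1) (2 ^ (j + 1) * κ1) := by
  induction n with
  | zero =>
      have h : ∀ k : Fin d → ℤ,
          (if κ1 ≤ κ0 * knorm k ∧ κ0 * knorm k < 2 ^ 0 * κ1 then t k else 0) = 0 := by
        intro k
        rw [if_neg]
        rintro ⟨h1, h2⟩
        rw [pow_zero, one_mul] at h2
        linarith
      unfold shellSum
      rw [Finset.range_zero, Finset.sum_empty]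
      have h2 : (∑' k : Fin d → ℤ,
          (if κ1 ≤ κ0 * knorm k ∧ κ0 * knorm k < 2 ^ 0 * κ1 then t k else 0)) = 0 := by
        rw [tsum_congr h, tsum_zero]
      rw [h2, mul_zero]
  | succ n ih =>
      have hp : (1:ℝ) ≤ 2 ^ n := one_le_pow₀ (by norm_num)
      have hp2 : (2:ℝ) ^ n ≤ 2 ^ (n + 1) := by rw [pow_succ]; nlinarith
      rw [Finset.sum_range_succ, ← ih,
        ← shell_add hts L κ0 (by nlinarith) (by nlinarith)]

lemma top_eq (hts : IsTracerSpectrum d t) (L : ℝ) {κ0 : ℝ} (hκ0 : 0 < κ0) :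
    shellSumTop d L κ0 t κ0 = L ^ (-(d : ℤ)) * ∑' k : Fin d → ℤ, t k := by
  unfold shellSumTop
  congr 1
  refine tsum_congr fun k => ?_
  by_cases hk : k = 0
  · subst hk
    have h0 : knorm (0 : Fin d → ℤ) = 0 := by simp [knorm]
    rw [h0, mul_zero, if_neg (not_le.mpr hκ0), hts.map_zero]
  · rw [if_pos]
    nlinarith [one_le_knorm hk]

end Aux

/-- Section 5.2, moderate Schmidt number: `κ_θ ∼ κ_η` up to a logarithm. -/
theorem tracer_2D_moderate_Schmidt
    (c1 c2 c3 c4 c5 : ℝ)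
    (hc1 : 0 < c1) (hc2 : 0 < c2) (hc3 : 0 < c3) (hc4 : 0 < c4) (hc5 : 0 < c5) :
    ∃ c C : ℝ, 0 < c ∧ 0 < C ∧
      ∀ (L μ ν η κfp κ0 Sc κη χ : ℝ) (t : (Fin 2 → ℤ) → ℝ),
        0 < L → 0 < μ → 0 < ν → 0 < η →
        IsTracerSpectrum 2 t →
        κ0 = 2 * π / L →
        Sc = ν / μ →
        c4 ≤ Sc → Sc ≤ c5 →
        κη = (η / ν ^ 3) ^ (1 / 6 : ℝ) →
        χ = chiRate 2 L κ0 μ t →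
        κ0 ≤ κfp → 4 * κfp ≤ κη →
        (∀ κ, κfp ≤ κ → κ ≤ κη →
          c1 * χ * η ^ (-1 / 3 : ℝ) ≤ shellSum 2 L κ0 t κ (2 * κ) ∧
          shellSum 2 L κ0 t κ (2 * κ) ≤ c2 * χ * η ^ (-1 / 3 : ℝ)) →
        shellSumTop 2 L κ0 t κ0 ≤ c3 * shellSum 2 L κ0 t κfp κη →
        c * κη ^ 2 / Real.log (κη / κfp) ≤ kThetaSq 2 κ0 t ∧
          kThetaSq 2 κ0 t ≤ C * κη ^ 2 / Real.log (κη / κfp) := by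
  have hlog2 : 0 < Real.log 2 := Real.log_pos (by norm_num)
  refine ⟨c4 * Real.log 2 / (2 * c2 * c3), 2 * Real.log 2 * c5 / c1,
    div_pos (mul_pos hc4 hlog2) (by positivity),
    div_pos (mul_pos (mul_pos two_pos hlog2) hc5) hc1, ?_⟩
  intro L μ ν η κfp κ0 Sc κη χ t hL hμ hν hη hts hκ0e hSce hSc4 hSc5 hκηe hχe hκ0fp h4fp hshell htop
  have hκ0pos : 0 < κ0 := by rw [hκ0e]; positivity
  have hκfp : 0 < κfp := lt_of_lt_of_le hκ0pos hκ0fp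
  have hκη : 0 < κη := by linarith
  have hr : 0 < κη / κfp := div_pos hκη hκfp
  have hr4 : (4:ℝ) ≤ κη / κfp := (le_div_iff₀ hκfp).2 (by linarith)
  -- logarithms
  set B := Real.logb 2 (κη / κfp) with hBdef
  have h22 : (2:ℝ) ^ (2:ℝ) = 4 := by
    rw [show (4:ℝ) = (2:ℝ) ^ (2:ℕ) by norm_num, ← Real.rpow_natCast (2:ℝ) 2]
    norm_num
  have hB2 : (2:ℝ) ≤ B := by
    rw [hBdef, Real.le_logb_iff_rpow_le (by norm_num) hr, h22]
    exact hr4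
  set N := Nat.floor B with hNdef
  have hN2 : 2 ≤ N := Nat.le_floor (by exact_mod_cast hB2)
  have hNB : (N:ℝ) ≤ B := Nat.floor_le (by linarith)
  have hBN1 : B < (N:ℝ) + 1 := Nat.lt_floor_add_one B
  have hpowN : (2:ℝ) ^ N ≤ κη / κfp := by
    have h1 : (2:ℝ) ^ ((N:ℕ):ℝ) ≤ (2:ℝ) ^ B := Real.rpow_le_rpow_of_exponent_le one_le_two hNB
    rw [Real.rpow_natCast] at h1
    rwa [Real.rpow_logb (by norm_num) (by norm_num) hr] at h1
  have hpowN1 : κη / κfp ≤ (2:ℝ) ^ (N + 1) := by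
    have h1 : (2:ℝ) ^ B ≤ (2:ℝ) ^ (((N + 1 : ℕ)):ℝ) := by
      refine Real.rpow_le_rpow_of_exponent_le one_le_two ?_
      push_cast
      linarith
    rw [Real.rpow_natCast] at h1
    rwa [Real.rpow_logb (by norm_num) (by norm_num) hr] at h1
  have hNκη : (2:ℝ) ^ N * κfp ≤ κη := (le_div_iff₀ hκfp).mp hpowN
  have hκη1 : κη ≤ 2 ^ (N + 1) * κfp := by
    have h := (div_le_iff₀ hκfp).mp hpowN1
    linarith
  -- positivity of sums
  obtain ⟨k₀, hk₀⟩ := hts.exists_ne_zero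
  have hk₀ne : k₀ ≠ 0 := by rintro rfl; exact hk₀ hts.map_zero
  have htk₀ : 0 < t k₀ := lt_of_le_of_ne (hts.nonneg k₀) (Ne.symm hk₀)
  have hS1 : 0 < ∑' k : Fin 2 → ℤ, t k :=
    lt_of_lt_of_le htk₀ (Summable.le_tsum (summable_t hts) k₀ fun _ _ => hts.nonneg _)
  have hS2 : 0 < ∑' k : Fin 2 → ℤ, knorm k ^ 2 * t k := by
    have hkn : (1:ℝ) ≤ knorm k₀ ^ 2 := by
      have := one_le_knorm hk₀ne
      nlinarith
    have h1 : 0 < knorm k₀ ^ 2 * t k₀ := mul_pos (lt_of_lt_of_le one_pos hkn) htk₀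
    exact lt_of_lt_of_le h1
      (Summable.le_tsum (summable_k2t hts) k₀ fun _ _ => mul_nonneg (sq_nonneg _) (hts.nonneg _))
  have hLz : (0:ℝ) < L ^ (-((2:ℕ) : ℤ)) := zpow_pos hL _
  have hχpos : 0 < χ := by
    rw [hχe]; unfold chiRate
    exact mul_pos (mul_pos (mul_pos hμ hLz) (pow_pos hκ0pos 2)) hS2
  set A := χ * η ^ (-1 / 3 : ℝ) with hAdef
  have hApos : 0 < A := mul_pos hχpos (Real.rpow_pos_of_pos hη _)
  set E := η ^ ((1:ℝ) / 3) with hEdef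
  have hEpos : 0 < E := Real.rpow_pos_of_pos hη _
  have hAE : A * E = χ := by
    rw [hAdef, hEdef, mul_assoc, ← Real.rpow_add hη]
    norm_num
  set T := shellSumTop 2 L κ0 t κ0 with hTdef
  have hTeq : T = L ^ (-((2:ℕ) : ℤ)) * ∑' k : Fin 2 → ℤ, t k := top_eq hts L hκ0pos
  have hTpos : 0 < T := by rw [hTeq]; exact mul_pos hLz hS1
  have hkθ : kThetaSq 2 κ0 t = A * E / (μ * T) := by
    rw [hAE, hχe, hTeq]
    unfold kThetaSq chiRate
    rw [div_eq_div_iff hS1.ne' (mul_pos hμ (mul_pos hLz hS1)).ne']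
    ring
  -- dyadic shell bounds
  have hshell_low : ∀ j, j ≤ N →
      c1 * A ≤ shellSum 2 L κ0 t (2 ^ j * κfp) (2 ^ (j + 1) * κfp) := by
    intro j hj
    have hj1 : (1:ℝ) ≤ 2 ^ j := one_le_pow₀ (by norm_num)
    have hjN : (2:ℝ) ^ j ≤ 2 ^ N := pow_le_pow_right₀ (by norm_num) hj
    have h1 : κfp ≤ 2 ^ j * κfp := le_mul_of_one_le_left hκfp.le hj1
    have h2 : 2 ^ j * κfp ≤ κη :=
      le_trans (mul_le_mul_of_nonneg_right hjN hκfp.le) hNκη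
    have h3 := (hshell (2 ^ j * κfp) h1 h2).1
    rw [show 2 * (2 ^ j * κfp) = 2 ^ (j + 1) * κfp by ring] at h3
    calc c1 * A = c1 * χ * η ^ (-1 / 3 : ℝ) := by rw [hAdef]; ring
      _ ≤ _ := h3
  have hshell_up : ∀ j, j ≤ N →
      shellSum 2 L κ0 t (2 ^ j * κfp) (2 ^ (j + 1) * κfp) ≤ c2 * A := by
    intro j hj
    have hj1 : (1:ℝ) ≤ 2 ^ j := one_le_pow₀ (by norm_num)
    have hjN : (2:ℝ) ^ j ≤ 2 ^ N := pow_le_pow_right₀ (by norm_num) hj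
    have h1 : κfp ≤ 2 ^ j * κfp := le_mul_of_one_le_left hκfp.le hj1
    have h2 : 2 ^ j * κfp ≤ κη :=
      le_trans (mul_le_mul_of_nonneg_right hjN hκfp.le) hNκη
    have h3 := (hshell (2 ^ j * κfp) h1 h2).2
    rw [show 2 * (2 ^ j * κfp) = 2 ^ (j + 1) * κfp by ring] at h3
    calc shellSum 2 L κ0 t (2 ^ j * κfp) (2 ^ (j + 1) * κfp)
        ≤ c2 * χ * η ^ (-1 / 3 : ℝ) := h3
      _ = c2 * A := by rw [hAdef]; ring
  have hTlow : (N:ℝ) * (c1 * A) ≤ T := by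
    calc (N:ℝ) * (c1 * A) = ∑ _j ∈ Finset.range N, c1 * A := by
          rw [Finset.sum_const, Finset.card_range, nsmul_eq_mul]
      _ ≤ ∑ j ∈ Finset.range N, shellSum 2 L κ0 t (2 ^ j * κfp) (2 ^ (j + 1) * κfp) :=
          Finset.sum_le_sum fun j hj => hshell_low j (Finset.mem_range.mp hj).le
      _ = shellSum 2 L κ0 t κfp (2 ^ N * κfp) := (shell_dyadic hts L κ0 hκfp N).symm
      _ ≤ T := shell_le_top hts hL κ0 hκ0fp _
  have hTup : T ≤ c3 * (((N:ℝ) + 1) * (c2 * A)) := by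
    have h1 : shellSum 2 L κ0 t κfp κη ≤ shellSum 2 L κ0 t κfp (2 ^ (N + 1) * κfp) :=
      shell_mono_right hts hL κ0 κfp hκη1
    have h2 : shellSum 2 L κ0 t κfp (2 ^ (N + 1) * κfp) ≤ ((N:ℝ) + 1) * (c2 * A) := by
      rw [shell_dyadic hts L κ0 hκfp (N + 1)]
      calc ∑ j ∈ Finset.range (N + 1), shellSum 2 L κ0 t (2 ^ j * κfp) (2 ^ (j + 1) * κfp)
          ≤ ∑ _j ∈ Finset.range (N + 1), c2 * A :=
            Finset.sum_le_sum fun j hj => hshell_up j (Nat.lt_succ_iff.mp (Finset.mem_range.mp hj))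
        _ = ((N:ℝ) + 1) * (c2 * A) := by
            rw [Finset.sum_const, Finset.card_range, nsmul_eq_mul]
            push_cast
            ring
    calc T ≤ c3 * shellSum 2 L κ0 t κfp κη := htop
      _ ≤ c3 * (((N:ℝ) + 1) * (c2 * A)) :=
          mul_le_mul_of_nonneg_left (h1.trans h2) hc3.le
  -- arithmetic preliminaries
  have hl : Real.log (κη / κfp) = B * Real.log 2 := by
    rw [hBdef, Real.logb, div_mul_cancel₀ _ hlog2.ne']
  have hBpos : (0:ℝ) < B := by linarith
  have hN1B : (N:ℝ) + 1 ≤ 2 * B := by linarith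
  have hB2N : B ≤ 2 * (N:ℝ) := by linarith
  have hκη2 : κη ^ 2 = E / ν := by
    have hb : (0:ℝ) ≤ η / ν ^ 3 := by positivity
    have e1 : κη ^ 2 = (η / ν ^ 3) ^ ((1:ℝ) / 3) := by
      rw [hκηe, ← Real.rpow_natCast ((η / ν ^ 3) ^ ((1:ℝ) / 6)) 2, ← Real.rpow_mul hb]
      norm_num
    have e2 : ((ν ^ 3 : ℝ)) ^ ((1:ℝ) / 3) = ν := by
      rw [← Real.rpow_natCast ν 3, ← Real.rpow_mul hν.le]
      norm_num
    rw [e1, Real.div_rpow hη.le (by positivity), e2, hEdef]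
  have hc4μ : c4 * μ ≤ ν := by
    rw [hSce, le_div_iff₀ hμ] at hSc4
    linarith
  have hνc5 : ν ≤ c5 * μ := by
    rw [hSce, div_le_iff₀ hμ] at hSc5
    linarith
  have hprod : (0:ℝ) ≤ Real.log 2 * E * B * A :=
    mul_nonneg (mul_nonneg (mul_nonneg hlog2.le hEpos.le) hBpos.le) hApos.le
  constructor
  · -- lower bound
    rw [hkθ, hκη2, hl, div_le_div_iff₀ (mul_pos hBpos hlog2) (mul_pos hμ hTpos)]
    have hT3 : T ≤ 2 * c2 * c3 * (B * A) := by
      calc T ≤ c3 * (((N:ℝ) + 1) * (c2 * A)) := hTup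
        _ ≤ c3 * ((2 * B) * (c2 * A)) := by
            refine mul_le_mul_of_nonneg_left ?_ hc3.le
            exact mul_le_mul_of_nonneg_right hN1B (mul_pos hc2 hApos).le
        _ = 2 * c2 * c3 * (B * A) := by ring
    calc c4 * Real.log 2 / (2 * c2 * c3) * (E / ν) * (μ * T)
        ≤ c4 * Real.log 2 / (2 * c2 * c3) * (E / ν) * (μ * (2 * c2 * c3 * (B * A))) := by
          refine mul_le_mul_of_nonneg_left (mul_le_mul_of_nonneg_left hT3 hμ.le) ?_
          positivity
      _ = (c4 * μ / ν) * (Real.log 2 * E * B * A) := by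
          field_simp
      _ ≤ 1 * (Real.log 2 * E * B * A) := by
          refine mul_le_mul_of_nonneg_right ?_ hprod
          rw [div_le_one hν]
          exact hc4μ
      _ = A * E * (B * Real.log 2) := by ring
  · -- upper bound
    rw [hkθ, hκη2, hl, div_le_div_iff₀ (mul_pos hμ hTpos) (mul_pos hBpos hlog2)]
    have hT5 : B / 2 * (c1 * A) ≤ T := by
      calc B / 2 * (c1 * A) ≤ (N:ℝ) * (c1 * A) := by
            refine mul_le_mul_of_nonneg_right ?_ (mul_pos hc1 hApos).le
            linarith
        _ ≤ T := hTlow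
    have h1 : (1:ℝ) ≤ c5 * μ / ν := by
      rw [le_div_iff₀ hν]
      linarith
    calc A * E * (B * Real.log 2) = 1 * (Real.log 2 * E * B * A) := by ring
      _ ≤ (c5 * μ / ν) * (Real.log 2 * E * B * A) := mul_le_mul_of_nonneg_right h1 hprod
      _ = 2 * Real.log 2 * c5 / c1 * (E / ν) * (μ * (B / 2 * (c1 * A))) := by
          field_simp
      _ ≤ 2 * Real.log 2 * c5 / c1 * (E / ν) * (μ * T) := by
          refine mul_le_mul_of_nonneg_left (mul_le_mul_of_nonneg_left hT5 hμ.le) ?_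
          positivity
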